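/- Let Γ be a connected highly-regular graph with CAM C = [c_{i,j}]_{1≤i,j≤m}. Then for each i ∈ {0, 1, …, diam(Γ)} there exists a nonempty subset S_i of {1, …, m}, depending only on C and i, such that for every vertex u and every witnessing partition V_1(u) = {u}, V_2(u), …, V_m(u) for u, one has D_i(u) = ⊔_{t∈S_i} V_t(u). -/

import Mathlib

/-- A partition of the vertex set (encoded as a cell-assignment map `P : V → Fin m`)
witnessing that `C` is a collapsed adjacency matrix at the vertex `u`:
the cell of index `0` is exactly `{u}`, every cell is nonempty, and every vertex in
cell `j` has exactly `C i j` neighbours in cell `i`. -/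
def IsWitnessingPartition {V : Type*} [Fintype V] (G : SimpleGraph V) {m : ℕ}
    (C : Fin m → Fin m → ℕ) (u : V) (P : V → Fin m) : Prop :=
  (∀ v : V, (P v : ℕ) = 0 ↔ v = u) ∧
  (∀ t : Fin m, ∃ v : V, P v = t) ∧
  (∀ (i j : Fin m) (y : V), P y = j → {z : V | P z = i ∧ G.Adj y z}.ncard = C i j)

/-- `C` is a collapsed adjacency matrix (CAM) of size `m` for `G`: `2 ≤ m`, `m < n`
(with `m = n` allowed only when `n = 2`), and every vertex admits a witnessing partition. -/
def IsCAM {V : Type*} [Fintype V] (G : SimpleGraph V) {m : ℕ}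
    (C : Fin m → Fin m → ℕ) : Prop :=
  2 ≤ m ∧ (m < Fintype.card V ∨ (m = Fintype.card V ∧ Fintype.card V = 2)) ∧
  ∀ u : V, ∃ P : V → Fin m, IsWitnessingPartition G C u P

/-- A graph is highly-regular if it admits some CAM. -/
def IsHighlyRegular {V : Type*} [Fintype V] (G : SimpleGraph V) : Prop :=
  ∃ (m : ℕ) (C : Fin m → Fin m → ℕ), IsCAM G C

/-- The index of a highly-regular graph: the least size of a CAM. -/
noncomputable def hrIndex {V : Type*} [Fintype V] (G : SimpleGraph V) : ℕ :=
  sInf {m : ℕ | ∃ C : Fin m → Fin m → ℕ, IsCAM G C}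

/-- A connected graph is distance-regular if the numbers `|D_1(v) ∩ D_{i-1}(u)|`,
`|D_1(v) ∩ D_i(u)|`, `|D_1(v) ∩ D_{i+1}(u)|` depend only on `i = d(u,v)`. -/
def IsDistanceRegular {V : Type*} [Fintype V] (G : SimpleGraph V) : Prop :=
  G.Connected ∧ ∀ i : ℕ, 1 ≤ i → i ≤ G.diam →
    ∀ j : ℕ, j = i - 1 ∨ j = i ∨ j = i + 1 →
    ∀ u v x y : V, G.dist u v = i → G.dist x y = i →
      {w : V | G.Adj v w ∧ G.dist u w = j}.ncard =
      {w : V | G.Adj y w ∧ G.dist x w = j}.ncard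

/-- The graph on cells induced by a CAM. -/
def camGraph {m : ℕ} (C : Fin m → Fin m → ℕ) : SimpleGraph (Fin m) where
  Adj s t := s ≠ t ∧ C s t ≠ 0 ∧ C t s ≠ 0
  symm := ⟨fun _ _ ⟨h1, h2, h3⟩ => ⟨h1.symm, h3, h2⟩⟩
  loopless := ⟨fun _ ⟨h1, _⟩ => (h1 rfl).elim⟩

lemma cam_dist {V : Type*} [Fintype V] {G : SimpleGraph V} (hconn : G.Connected)
    {m : ℕ} {C : Fin m → Fin m → ℕ} {u : V} {P : V → Fin m}
    (hP : IsWitnessingPartition G C u P) (v : V) :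
    (camGraph C).Reachable (P u) (P v) ∧ G.dist u v = (camGraph C).dist (P u) (P v) := by
  -- adjacency transfer
  have hpos : ∀ v w : V, G.Adj v w → C (P v) (P w) ≠ 0 := by
    intro v w h
    rw [← hP.2.2 (P v) (P w) w rfl]
    have hv : v ∈ {z : V | P z = P v ∧ G.Adj w z} := ⟨rfl, h.symm⟩
    exact ((Set.ncard_pos (Set.toFinite _)).mpr ⟨v, hv⟩).ne'
  have hadj : ∀ v w : V, G.Adj v w → P v ≠ P w → (camGraph C).Adj (P v) (P w) :=
    fun v w h hne => ⟨hne, hpos v w h, hpos w v h.symm⟩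
  -- projection of walks
  have hproj : ∀ (v w : V) (p : G.Walk v w),
      ∃ q : (camGraph C).Walk (P v) (P w), q.length ≤ p.length := by
    intro v w p
    induction p with
    | nil => exact ⟨SimpleGraph.Walk.nil, le_rfl⟩
    | @cons a b c h q ih =>
      obtain ⟨q', hq'⟩ := ih
      by_cases hab : P a = P b
      · exact ⟨q'.copy hab.symm rfl, by simpa using hq'.trans (Nat.le_succ _)⟩
      · exact ⟨SimpleGraph.Walk.cons (hadj a b h hab) q', by simpa using Nat.succ_le_succ hq'⟩
  have hreach : ∀ v w : V, (camGraph C).Reachable (P v) (P w) := by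
    intro v w
    obtain ⟨p⟩ := hconn v w
    obtain ⟨q, _⟩ := hproj v w p
    exact ⟨q⟩
  -- lifting: G.dist u v ≤ camGraph dist
  have hlift : ∀ k, ∀ v : V, (camGraph C).dist (P u) (P v) = k → G.dist u v ≤ k := by
    intro k
    induction k using Nat.strong_induction_on with
    | _ k IH =>
      intro v hk
      rcases Nat.eq_zero_or_pos k with h0 | hposk
      · subst h0
        have : P u = P v := (hreach u v).dist_eq_zero_iff.mp hk
        have h0' : (P v : ℕ) = 0 := by rw [← this]; exact (hP.1 u).mpr rfl
        simp [(hP.1 v).mp h0']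
      · obtain ⟨p, hp⟩ := (hreach u v).exists_walk_length_eq_dist
        have hplen : p.length = k := by rw [hp, hk]
        have hrlen : p.reverse.length = k := by simpa using hplen
        have hnn : ¬ p.reverse.Nil := by
          rw [SimpleGraph.Walk.nil_iff_length_eq, hrlen]; omega
        obtain ⟨t, ha, q, hrev⟩ := SimpleGraph.Walk.not_nil_iff.mp hnn
        rw [hrev] at hrlen
        simp [SimpleGraph.Walk.length_cons] at hrlen
        have hdt : (camGraph C).dist (P u) t ≤ k - 1 := by
          have := SimpleGraph.dist_le q.reverse
          rw [SimpleGraph.Walk.length_reverse] at this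
          omega
        have hCt : C t (P v) ≠ 0 := ha.2.2
        have hz : ∃ z : V, P z = t ∧ G.Adj v z := by
          have := hP.2.2 t (P v) v rfl
          rw [← this] at hCt
          exact Set.nonempty_of_ncard_ne_zero hCt
        obtain ⟨z, hzt, hzadj⟩ := hz
        have hdz : G.dist u z ≤ k - 1 := by
          have hlt : (camGraph C).dist (P u) (P z) < k := by
            rw [hzt]; omega
          refine (IH _ hlt z rfl).trans ?_
          rw [hzt]; omega
        obtain ⟨w, hw⟩ := (hconn u z).exists_walk_length_eq_dist
        have := SimpleGraph.dist_le (w.concat hzadj.symm)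
        rw [SimpleGraph.Walk.length_concat, hw] at this
        omega
  refine ⟨hreach u v, le_antisymm (hlift _ v rfl) ?_⟩
  obtain ⟨p, hp⟩ := (hconn u v).exists_walk_length_eq_dist
  obtain ⟨q, hq⟩ := hproj u v p
  calc (camGraph C).dist (P u) (P v) ≤ q.length := SimpleGraph.dist_le q
    _ ≤ p.length := hq
    _ = G.dist u v := hp

lemma exists_dist_eq_of_le {W : Type*} (H : SimpleGraph W) :
    ∀ (d : ℕ) (a b : W), H.Reachable a b → H.dist a b = d →
      ∀ i ≤ d, ∃ c, H.dist a c = i := by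
  intro d
  induction d with
  | zero =>
    intro a b _ _ i hi
    interval_cases i
    exact ⟨a, SimpleGraph.dist_self⟩
  | succ d IH =>
    intro a b hr hd i hi
    rcases Nat.lt_or_ge i (d + 1) with hlt | hge
    · obtain ⟨p, hp⟩ := hr.exists_walk_length_eq_dist
      have hplen : p.length = d + 1 := by rw [hp, hd]
      have hrlen : p.reverse.length = d + 1 := by simpa using hplen
      cases hrev : p.reverse with
      | nil => rw [hrev] at hrlen; simp at hrlen
      | @cons _ t _ ha q =>
        rw [hrev] at hrlen
        simp [SimpleGraph.Walk.length_cons] at hrlen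
        have h1 : H.dist a t ≤ d := by
          have := SimpleGraph.dist_le q.reverse
          rw [SimpleGraph.Walk.length_reverse] at this
          omega
        have h2 : H.dist a b ≤ H.dist a t + 1 := by
          have hrt : H.Reachable a t := ⟨q.reverse⟩
          obtain ⟨w, hw⟩ := hrt.exists_walk_length_eq_dist
          have := SimpleGraph.dist_le (w.concat ha.symm)
          rw [SimpleGraph.Walk.length_concat, hw] at this
          exact this
        have hdt : H.dist a t = d := by omega
        exact IH a t ⟨q.reverse⟩ hdt i (by omega)
    · exact ⟨b, by omega⟩

/-- For a connected highly-regular graph with CAM `C` and each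
`i ∈ {0, …, diam Γ}` there is a nonempty `S_i ⊆ {1, …, m}`, depending only on `C` and
`i`, such that `D_i(u) = ⊔_{t ∈ S_i} V_t(u)` for every `u` and every witnessing
partition at `u`. -/
theorem stmt10 {V : Type*} [Fintype V] (G : SimpleGraph V) (hconn : G.Connected)
    {m : ℕ} (C : Fin m → Fin m → ℕ) (hC : IsCAM G C) :
    ∀ i : ℕ, i ≤ G.diam → ∃ S : Finset (Fin m), S.Nonempty ∧
      ∀ (u : V) (P : V → Fin m), IsWitnessingPartition G C u P →
        ∀ v : V, (P v ∈ S ↔ G.dist u v = i) := by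
  intro i hi
  have hm2 : 2 ≤ m := hC.1
  have hcard : 2 ≤ Fintype.card V := by
    rcases hC.2.1 with h | ⟨_, h⟩ <;> omega
  have hne : Nonempty V := Fintype.card_pos_iff.mp (by omega)
  set z0 : Fin m := ⟨0, by omega⟩ with hz0
  have hPu : ∀ (u : V) (P : V → Fin m), IsWitnessingPartition G C u P → P u = z0 := by
    intro u P hP
    have := (hP.1 u).mpr rfl
    exact Fin.ext (by simpa using this)
  refine ⟨Finset.univ.filter (fun t => (camGraph C).dist z0 t = i), ?_, ?_⟩
  · obtain ⟨a, b, hab⟩ := SimpleGraph.exists_dist_eq_diam (G := G)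
    obtain ⟨P, hP⟩ := hC.2.2 a
    obtain ⟨hr, hd⟩ := cam_dist hconn hP b
    rw [hPu a P hP] at hr hd
    obtain ⟨c, hc⟩ := exists_dist_eq_of_le (camGraph C) ((camGraph C).dist z0 (P b))
      z0 (P b) hr rfl i (by omega)
    exact ⟨c, by simp [hc]⟩
  · intro u P hP v
    obtain ⟨hr, hd⟩ := cam_dist hconn hP v
    rw [hPu u P hP] at hr hd
    simp [hd]
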